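/- For four points in ℝ^2 forming a 1-cycle in the Vietoris–Rips complex (i.e., an equilateral-diamond-type configuration where the cycle graph on the four points exists at the birthtime and both diagonals exceed twice the deathtime bound 1), the maximal additive lifetime ℓ⁺_max(3,4) equals 1 − 1/√2, realized by the square (rhombus) with vertices (0,0), (2,0), (1,1), (1,−1) rescaled appropriately, i.e., by an equilateral diamond of side length √2. -/

import Mathlib

/-- The point `(a, b)` of the Euclidean plane. -/
noncomputable def pt (a b : ℝ) : EuclideanSpace ℝ (Fin 2) :=
  (WithLp.equiv 2 (Fin 2 → ℝ)).symm ![a, b]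

/-- The Vietoris–Rips birthtime of the 1-cycle with cycle order `y₁, y₃, y₂, y₄`
(so that `y₁y₂` and `y₃y₄` are the diagonals): half the longest cycle edge. -/
noncomputable def vrBirth (y₁ y₂ y₃ y₄ : EuclideanSpace ℝ (Fin 2)) : ℝ :=
  max (max (dist y₁ y₃) (dist y₃ y₂)) (max (dist y₂ y₄) (dist y₄ y₁)) / 2

/-- The Vietoris–Rips deathtime: half of the shorter diagonal. -/
noncomputable def vrDeath (y₁ y₂ y₃ y₄ : EuclideanSpace ℝ (Fin 2)) : ℝ :=
  min (dist y₁ y₂) (dist y₃ y₄) / 2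

lemma dist_sq2 (x y : EuclideanSpace ℝ (Fin 2)) :
    dist x y ^ 2 = (x 0 - y 0)^2 + (x 1 - y 1)^2 := by
  rw [EuclideanSpace.dist_eq, Real.sq_sqrt (by positivity)]
  simp [Fin.sum_univ_two, Real.dist_eq, sq_abs]

lemma dist_pt (a b c d : ℝ) : dist (pt a b) (pt c d) = Real.sqrt ((a-c)^2+(b-d)^2) := by
  rw [EuclideanSpace.dist_eq]
  congr 1
  simp [pt, Fin.sum_univ_two, Real.dist_eq, sq_abs]

/-- Quadrilateral inequality: sum of squares of sides ≥ sum of squares of diagonals. -/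
lemma quad_ineq (y₁ y₂ y₃ y₄ : EuclideanSpace ℝ (Fin 2)) :
    dist y₁ y₂ ^ 2 + dist y₃ y₄ ^ 2 ≤
      dist y₁ y₃ ^ 2 + dist y₃ y₂ ^ 2 + dist y₂ y₄ ^ 2 + dist y₄ y₁ ^ 2 := by
  rw [dist_sq2, dist_sq2, dist_sq2, dist_sq2, dist_sq2, dist_sq2]
  nlinarith [sq_nonneg (y₁ 0 + y₂ 0 - y₃ 0 - y₄ 0), sq_nonneg (y₁ 1 + y₂ 1 - y₃ 1 - y₄ 1)]

theorem stmt_11 :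
    -- upper bound: any four-point Vietoris–Rips 1-cycle with deathtime ≤ 1 has
    -- additive lifetime at most 1 - 1/√2
    (∀ y₁ y₂ y₃ y₄ : EuclideanSpace ℝ (Fin 2),
      vrDeath y₁ y₂ y₃ y₄ ≤ 1 →
      vrBirth y₁ y₂ y₃ y₄ ≤ vrDeath y₁ y₂ y₃ y₄ →
      vrDeath y₁ y₂ y₃ y₄ - vrBirth y₁ y₂ y₃ y₄ ≤ 1 - 1 / Real.sqrt 2) ∧
    -- realized by the equilateral diamond (0,0), (2,0), (1,1), (1,-1)
    -- of side length √2
    (vrDeath (pt 0 0) (pt 2 0) (pt 1 1) (pt 1 (-1)) ≤ 1 ∧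
      dist (pt 0 0) (pt 1 1) = Real.sqrt 2 ∧
      vrDeath (pt 0 0) (pt 2 0) (pt 1 1) (pt 1 (-1)) -
        vrBirth (pt 0 0) (pt 2 0) (pt 1 1) (pt 1 (-1)) = 1 - 1 / Real.sqrt 2) := by
  have s2 : Real.sqrt 2 ^ 2 = 2 := Real.sq_sqrt (by norm_num)
  have s2pos : (0:ℝ) < Real.sqrt 2 := Real.sqrt_pos.mpr (by norm_num)
  have s2ge1 : (1:ℝ) ≤ Real.sqrt 2 := by nlinarith
  constructor
  · intro y₁ y₂ y₃ y₄ hD hBD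
    set M := max (max (dist y₁ y₃) (dist y₃ y₂)) (max (dist y₂ y₄) (dist y₄ y₁)) with hM
    set m := min (dist y₁ y₂) (dist y₃ y₄) with hm
    have hMnn : 0 ≤ M := le_trans dist_nonneg (le_trans (le_max_left _ _) (le_max_left _ _))
    have hmnn : 0 ≤ m := le_min dist_nonneg dist_nonneg
    -- each edge ≤ M
    have e1 : dist y₁ y₃ ≤ M := le_trans (le_max_left _ _) (le_max_left _ _)
    have e2 : dist y₃ y₂ ≤ M := le_trans (le_max_right _ _) (le_max_left _ _)
    have e3 : dist y₂ y₄ ≤ M := le_trans (le_max_left _ _) (le_max_right _ _)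
    have e4 : dist y₄ y₁ ≤ M := le_trans (le_max_right _ _) (le_max_right _ _)
    have d1 : m ≤ dist y₁ y₂ := min_le_left _ _
    have d2 : m ≤ dist y₃ y₄ := min_le_right _ _
    have quad := quad_ineq y₁ y₂ y₃ y₄
    have hsq : m ^ 2 ≤ 2 * M ^ 2 := by
      nlinarith [dist_nonneg (x := y₁) (y := y₃), dist_nonneg (x := y₃) (y := y₂),
        dist_nonneg (x := y₂) (y := y₄), dist_nonneg (x := y₄) (y := y₁),
        dist_nonneg (x := y₁) (y := y₂), dist_nonneg (x := y₃) (y := y₄)]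
    have hmM : m ≤ Real.sqrt 2 * M := by
      nlinarith [mul_nonneg s2pos.le hMnn]
    have hD' : vrDeath y₁ y₂ y₃ y₄ = m / 2 := rfl
    have hB' : vrBirth y₁ y₂ y₃ y₄ = M / 2 := rfl
    rw [hD'] at hD
    rw [hD', hB']
    have key : m / 2 / Real.sqrt 2 ≤ M / 2 := by
      rw [div_div, div_le_div_iff₀ (by positivity) (by norm_num)]
      nlinarith
    have : m / 2 - M / 2 ≤ m / 2 * (1 - 1 / Real.sqrt 2) := by
      have h1 : m / 2 / Real.sqrt 2 = m / 2 * (1 / Real.sqrt 2) := by ring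
      nlinarith [key, h1]
    calc m / 2 - M / 2 ≤ m / 2 * (1 - 1 / Real.sqrt 2) := this
      _ ≤ 1 * (1 - 1 / Real.sqrt 2) := by
          apply mul_le_mul_of_nonneg_right hD
          have : 1 / Real.sqrt 2 ≤ 1 := by
            rw [div_le_one s2pos]; exact s2ge1
          linarith
      _ = 1 - 1 / Real.sqrt 2 := by ring
  · have h12 : dist (pt 0 0) (pt 2 0) = 2 := by
      rw [dist_pt]; norm_num
    have h34 : dist (pt 1 1) (pt 1 (-1)) = 2 := by
      rw [dist_pt]; norm_num
    have h13 : dist (pt 0 0) (pt 1 1) = Real.sqrt 2 := by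
      rw [dist_pt]; norm_num
    have h32 : dist (pt 1 1) (pt 2 0) = Real.sqrt 2 := by
      rw [dist_pt]; norm_num
    have h24 : dist (pt 2 0) (pt 1 (-1)) = Real.sqrt 2 := by
      rw [dist_pt]; norm_num
    have h41 : dist (pt 1 (-1)) (pt 0 0) = Real.sqrt 2 := by
      rw [dist_pt]; norm_num
    have hDv : vrDeath (pt 0 0) (pt 2 0) (pt 1 1) (pt 1 (-1)) = 1 := by
      rw [vrDeath, h12, h34]; norm_num
    have hBv : vrBirth (pt 0 0) (pt 2 0) (pt 1 1) (pt 1 (-1)) = Real.sqrt 2 / 2 := by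
      rw [vrBirth, h13, h32, h24, h41]; simp
    refine ⟨by rw [hDv], h13, ?_⟩
    rw [hDv, hBv]
    rw [show Real.sqrt 2 / 2 = 1 / Real.sqrt 2 by
      rw [eq_div_iff s2pos.ne']; nlinarith]
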